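/- In the two-sided card model with exactly one pair among the top four values (i.e., exactly two of a_1, a_2, a_3, a_4 lie on one common card, and the other two lie on distinct cards), Pr[X^2 > Y^3] = 12/16 = 3/4. -/

import Mathlib

open scoped Classical

/-- The `k`-th largest element (1-indexed) of a finite set of reals, defaulting to `0`. -/
noncomputable def kthLargest (s : Finset ℝ) (k : ℕ) : ℝ :=
  ((s.sort (· ≤ ·)).reverse).getD (k - 1) 0

/-- The probability of an event under the uniform distribution on a finite type. -/
noncomputable def uniformPr {α : Type*} [Fintype α] (E : α → Prop) : ℝ :=
  ((Finset.univ.filter E).card : ℝ) / (Fintype.card α : ℝ)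

lemma sort_get_lt_iff {N : ℕ} (s : Finset (Fin N)) (c : Fin N) (k : ℕ)
    (hk : k < (s.sort (· ≤ ·)).length) :
    (s.sort (· ≤ ·)).get ⟨k, hk⟩ < c ↔ k + 1 ≤ (s.filter (· < c)).card := by
  set L := s.sort (· ≤ ·) with hL
  have hsl : L.SortedLT := Finset.sortedLT_sort s
  have hmono : StrictMono L.get := hsl
  constructor
  · intro h
    have key := Finset.card_le_card_of_injOn (fun i : ℕ => L.getD i c)
      (s := Finset.range (k+1)) (t := s.filter (· < c)) ?_ ?_
    · simpa using key
    · intro i hi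
      rw [Finset.mem_coe, Finset.mem_range] at hi
      have hi' : i < L.length := lt_of_lt_of_le hi hk
      show L.getD i c ∈ _
      rw [List.getD_eq_get _ _ ⟨i, hi'⟩, Finset.mem_coe, Finset.mem_filter]
      refine ⟨(Finset.mem_sort (· ≤ ·)).1 (by simp [L]), ?_⟩
      exact lt_of_le_of_lt (hmono.monotone (show (⟨i, hi'⟩ : Fin L.length) ≤ ⟨k, hk⟩ from
        Fin.mk_le_mk.2 (Nat.lt_succ_iff.1 hi))) h
    · intro i hi j hj hij
      simp only at hij
      simp only [Finset.coe_range, Set.mem_Iio] at hi hj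
      have hi' : i < L.length := lt_of_lt_of_le hi hk
      have hj' : j < L.length := lt_of_lt_of_le hj hk
      rw [List.getD_eq_get _ _ ⟨i, hi'⟩, List.getD_eq_get _ _ ⟨j, hj'⟩] at hij
      exact Fin.mk.inj_iff.1 (hmono.injective hij)
  · intro h
    by_contra hcon
    push_neg at hcon
    have key := Finset.card_le_card_of_injOn (fun x : Fin N => L.idxOf x)
      (s := s.filter (· < c)) (t := Finset.range k) ?_ ?_
    · rw [Finset.card_range] at key; omega
    · intro x hx
      rw [Finset.mem_coe, Finset.mem_filter] at hx
      have hmem : x ∈ L := (Finset.mem_sort _).2 hx.1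
      have hidx : L.idxOf x < L.length := List.idxOf_lt_length_of_mem hmem
      rw [Finset.mem_coe, Finset.mem_range]
      by_contra hk'
      push_neg at hk'
      have hle : L.get ⟨k, hk⟩ ≤ L.get ⟨L.idxOf x, hidx⟩ := hmono.monotone hk'
      rw [List.idxOf_get] at hle
      exact absurd hx.2 (not_lt.2 (le_trans hcon hle))
    · intro x hx y hy hxy
      simp only at hxy
      simp only [Finset.coe_filter, Set.mem_setOf_eq] at hx hy
      have hxm : x ∈ L := (Finset.mem_sort _).2 hx.1
      have hym : y ∈ L := (Finset.mem_sort _).2 hy.1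
      have h1 : L.get ⟨L.idxOf x, List.idxOf_lt_length_of_mem hxm⟩ = x := List.idxOf_get _
      have h2 : L.get ⟨L.idxOf y, List.idxOf_lt_length_of_mem hym⟩ = y := List.idxOf_get _
      rw [← h1, ← h2]
      congr 1
      exact Fin.ext hxy


lemma sort_image_reverse {N : ℕ} (a : Fin N → ℝ) (ha : StrictAnti a) (s : Finset (Fin N)) :
    ((s.image a).sort (· ≤ ·)).reverse = (s.sort (· ≤ ·)).map a := by
  have hinj : Function.Injective a := ha.injective
  have hperm : List.Perm ((s.image a).sort (· ≤ ·)) (((s.sort (· ≤ ·)).map a).reverse) := by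
    rw [← Multiset.coe_eq_coe]
    calc (↑((s.image a).sort (· ≤ ·)) : Multiset ℝ) = (s.image a).val := Finset.sort_eq _ _
    _ = s.val.map a := Finset.image_val_of_injOn hinj.injOn
    _ = (↑(s.sort (· ≤ ·)) : Multiset (Fin N)).map a := by rw [Finset.sort_eq]
    _ = ↑((s.sort (· ≤ ·)).map a) := rfl
    _ = ↑(((s.sort (· ≤ ·)).map a).reverse) := (Multiset.coe_reverse _).symm
  have hsorted : (((s.sort (· ≤ ·)).map a).reverse).SortedLE := by
    have h1 : ((s.sort (· ≤ ·)).map a).Pairwise (fun u v : ℝ => v < u) := by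
      rw [List.pairwise_map]
      exact (Finset.sortedLT_sort s).pairwise.imp (fun h => ha h)
    have h2 : (((s.sort (· ≤ ·)).map a).reverse).Pairwise (· < ·) :=
      List.pairwise_reverse.2 h1
    exact (h2.imp (fun h => le_of_lt h)).sortedLE
  have := List.Perm.eq_of_sortedLE (Finset.pairwise_sort _ _).sortedLE hsorted hperm
  rw [this, List.reverse_reverse]

lemma kthLargest_image {N : ℕ} (a : Fin N → ℝ) (ha : StrictAnti a) (s : Finset (Fin N))
    (k : ℕ) (hk : k < (s.sort (· ≤ ·)).length) :
    kthLargest (s.image a) (k + 1) = a ((s.sort (· ≤ ·)).get ⟨k, hk⟩) := by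
  unfold kthLargest
  rw [sort_image_reverse a ha s]
  have hk' : k < ((s.sort (· ≤ ·)).map a).length := by simpa using hk
  rw [Nat.add_sub_cancel, List.getD_eq_get _ _ ⟨k, hk'⟩]
  simp

section
variable {N : ℕ} (pair : Fin N → Fin N) (hinv : ∀ x, pair (pair x) = x)

/-- Flip the colors on the card containing `z`. -/
noncomputable def flipCard (z : Fin N)
    (f : {f : Fin N → Bool // ∀ x, f (pair x) = !(f x)}) :
    {f : Fin N → Bool // ∀ x, f (pair x) = !(f x)} := by
  refine ⟨fun x => if x = z ∨ x = pair z then !(f.1 x) else f.1 x, ?_⟩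
  intro x
  have hpi : Function.Injective pair := Function.Involutive.injective hinv
  have hiff : (pair x = z ∨ pair x = pair z) ↔ (x = z ∨ x = pair z) := by
    constructor
    · rintro (h | h)
      · right; rw [← h, hinv]
      · left; exact hpi h
    · rintro (h | h)
      · right; rw [h]
      · left; rw [h, hinv]
  show (if pair x = z ∨ pair x = pair z then !(f.1 (pair x)) else f.1 (pair x))
      = !(if x = z ∨ x = pair z then !(f.1 x) else f.1 x)
  by_cases hx : x = z ∨ x = pair z
  · rw [if_pos hx, if_pos (hiff.2 hx), f.2 x]
  · rw [if_neg hx, if_neg (fun h => hx (hiff.1 h)), f.2 x]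

lemma flipCard_self (z : Fin N) (f : {f : Fin N → Bool // ∀ x, f (pair x) = !(f x)}) :
    (flipCard pair hinv z f).1 z = !(f.1 z) := by
  simp [flipCard]

lemma flipCard_other (z w : Fin N) (hwz : w ≠ z) (hwpz : w ≠ pair z)
    (f : {f : Fin N → Bool // ∀ x, f (pair x) = !(f x)}) :
    (flipCard pair hinv z f).1 w = f.1 w := by
  simp only [flipCard]
  rw [if_neg]
  rintro (h | h)
  · exact hwz h
  · exact hwpz h

lemma flipCard_flipCard (z : Fin N) (f : {f : Fin N → Bool // ∀ x, f (pair x) = !(f x)}) :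
    flipCard pair hinv z (flipCard pair hinv z f) = f := by
  apply Subtype.ext
  funext x
  simp only [flipCard]
  by_cases hx : x = z ∨ x = pair z <;> simp [hx]

include hinv in
lemma fiber_flip_card (z w : Fin N) (hwz : w ≠ z) (hwpz : w ≠ pair z) (b1 b2 : Bool) :
    (Finset.univ.filter (fun f : {f : Fin N → Bool // ∀ x, f (pair x) = !(f x)} =>
      f.1 z = b1 ∧ f.1 w = b2)).card =
    (Finset.univ.filter (fun f : {f : Fin N → Bool // ∀ x, f (pair x) = !(f x)} =>
      f.1 z = !b1 ∧ f.1 w = b2)).card := by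
  apply Finset.card_nbij' (flipCard pair hinv z) (flipCard pair hinv z)
  · intro f hf
    rw [Finset.mem_coe, Finset.mem_filter] at hf ⊢
    refine ⟨Finset.mem_univ _, ?_, ?_⟩
    · rw [flipCard_self, hf.2.1]
    · rw [flipCard_other pair hinv z w hwz hwpz, hf.2.2]
  · intro f hf
    rw [Finset.mem_coe, Finset.mem_filter] at hf ⊢
    refine ⟨Finset.mem_univ _, ?_, ?_⟩
    · rw [flipCard_self, hf.2.1, Bool.not_not]
    · rw [flipCard_other pair hinv z w hwz hwpz, hf.2.2]
  · intro f _; exact flipCard_flipCard pair hinv z f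
  · intro f _; exact flipCard_flipCard pair hinv z f

end


lemma uniformPr_congr {α : Type*} [Fintype α] {E E' : α → Prop} (h : ∀ a, E a ↔ E' a) :
    uniformPr E = uniformPr E' := by
  unfold uniformPr
  have he : Finset.univ.filter E = Finset.univ.filter E' := by
    ext f
    simp only [Finset.mem_filter]
    exact and_congr_right (fun _ => h f)
  rw [he]

theorem one_pair_case (n : ℕ) (hn : 3 ≤ n)
    (a : Fin (2 * n) → ℝ) (ha : StrictAnti a)
    (pair : Fin (2 * n) → Fin (2 * n))
    (hinv : ∀ x, pair (pair x) = x) (hnf : ∀ x, pair x ≠ x)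
    (honepair : ∃ x y : Fin (2 * n), (x : ℕ) < 4 ∧ (y : ℕ) < 4 ∧ x ≠ y ∧ pair x = y ∧
      ∀ z : Fin (2 * n), (z : ℕ) < 4 → z ≠ x → z ≠ y → 4 ≤ ((pair z : ℕ))) :
    uniformPr (fun f : {f : Fin (2 * n) → Bool // ∀ x, f (pair x) = !(f x)} =>
        kthLargest ((Finset.univ.filter (fun x => f.1 x = true)).image a) 2 >
          kthLargest ((Finset.univ.filter (fun x => f.1 x = false)).image a) 3) = 3 / 4 := by
  obtain ⟨x, y, hx4, hy4, hxy, hpxy, hrest⟩ := honepair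
  have h4lt : 4 < 2 * n := by omega
  set c4 : Fin (2 * n) := ⟨4, h4lt⟩ with hc4
  set S4 : Finset (Fin (2 * n)) := Finset.univ.filter (fun i => i < c4) with hS4
  have hmemS4 : ∀ i : Fin (2 * n), i ∈ S4 ↔ (i : ℕ) < 4 := by
    intro i; simp [hS4, Fin.lt_def, hc4]
  have hS4card : S4.card = 4 := by
    have he : S4 = (Finset.range 4).attachFin
        (fun m hm => lt_trans (Finset.mem_range.1 hm) h4lt) := by
      ext i
      rw [hmemS4, Finset.mem_attachFin, Finset.mem_range]
    rw [he, Finset.card_attachFin, Finset.card_range]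
  have hxS4 : x ∈ S4 := (hmemS4 x).2 hx4
  have hyS4 : y ∈ S4 := (hmemS4 y).2 hy4
  have hsub : ({x, y} : Finset (Fin (2 * n))) ⊆ S4 := by
    intro i hi
    rcases Finset.mem_insert.1 hi with h | h
    · exact h ▸ hxS4
    · exact (Finset.mem_singleton.1 h) ▸ hyS4
  have hP2 : (S4 \ {x, y}).card = 2 := by
    rw [Finset.card_sdiff_of_subset hsub, hS4card,
      Finset.card_insert_of_notMem (by simp [hxy]), Finset.card_singleton]
  obtain ⟨z, w, hzw, hZW⟩ := Finset.card_eq_two.1 hP2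
  have hzmem : z ∈ S4 \ {x, y} := hZW ▸ Finset.mem_insert_self z {w}
  have hwmem : w ∈ S4 \ {x, y} := hZW ▸ Finset.mem_insert_of_mem (Finset.mem_singleton_self w)
  rw [Finset.mem_sdiff] at hzmem hwmem
  have hz4 : (z : ℕ) < 4 := (hmemS4 z).1 hzmem.1
  have hw4 : (w : ℕ) < 4 := (hmemS4 w).1 hwmem.1
  have hzx : z ≠ x := by intro h; exact hzmem.2 (by simp [h])
  have hzy : z ≠ y := by intro h; exact hzmem.2 (by simp [h])
  have hwx : w ≠ x := by intro h; exact hwmem.2 (by simp [h])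
  have hwy : w ≠ y := by intro h; exact hwmem.2 (by simp [h])
  have hpz4 : 4 ≤ (pair z : ℕ) := hrest z hz4 hzx hzy
  have hpw4 : 4 ≤ (pair w : ℕ) := hrest w hw4 hwx hwy
  have hwpz : w ≠ pair z := fun h => by rw [h] at hw4; omega
  have hzpw : z ≠ pair w := fun h => by rw [h] at hz4; omega
  have hwz : w ≠ z := hzw.symm
  have hS4eq : S4 = {x, y, z, w} := by
    have h1 := Finset.union_sdiff_of_subset hsub
    rw [hZW] at h1
    rw [← h1]
    ext i
    simp only [Finset.mem_union, Finset.mem_insert, Finset.mem_singleton]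
    tauto
  have hyf : ∀ f : {f : Fin (2 * n) → Bool // ∀ x, f (pair x) = !(f x)},
      f.1 y = !(f.1 x) := by
    intro f; rw [← hpxy]; exact f.2 x
  have hcardTF : ∀ f : {f : Fin (2 * n) → Bool // ∀ x, f (pair x) = !(f x)},
      (Finset.univ.filter (fun i => f.1 i = true)).card = n ∧
      (Finset.univ.filter (fun i => f.1 i = false)).card = n := by
    intro f
    have hbij : (Finset.univ.filter (fun i => f.1 i = true)).card
        = (Finset.univ.filter (fun i => f.1 i = false)).card := by
      apply Finset.card_nbij' pair pair
      · intro i hi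
        rw [Finset.mem_coe, Finset.mem_filter] at hi ⊢
        exact ⟨Finset.mem_univ _, by simp [f.2 i, hi.2]⟩
      · intro i hi
        rw [Finset.mem_coe, Finset.mem_filter] at hi ⊢
        exact ⟨Finset.mem_univ _, by simp [f.2 i, hi.2]⟩
      · intro i _; exact hinv i
      · intro i _; exact hinv i
    have hsum : (Finset.univ.filter (fun i => f.1 i = true)).card
        + (Finset.univ.filter (fun i => f.1 i = false)).card = 2 * n := by
      have hh := Finset.card_filter_add_card_filter_not
        (s := (Finset.univ : Finset (Fin (2 * n)))) (p := fun i => f.1 i = true)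
      simp only [Bool.not_eq_true] at hh
      simpa using hh
    omega
  have hevent : ∀ f : {f : Fin (2 * n) → Bool // ∀ x, f (pair x) = !(f x)},
      (kthLargest ((Finset.univ.filter (fun x => f.1 x = true)).image a) 2 >
        kthLargest ((Finset.univ.filter (fun x => f.1 x = false)).image a) 3)
      ↔ (f.1 z = true ∨ f.1 w = true) := by
    intro f
    obtain ⟨hTc, hFc⟩ := hcardTF f
    set T := Finset.univ.filter (fun i => f.1 i = true) with hT
    set F := Finset.univ.filter (fun i => f.1 i = false) with hF
    have h1 : 1 < (T.sort (· ≤ ·)).length := by rw [Finset.length_sort, hTc]; omega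
    have h2 : 2 < (F.sort (· ≤ ·)).length := by rw [Finset.length_sort, hFc]; omega
    have e2 : kthLargest (T.image a) 2 = a ((T.sort (· ≤ ·)).get ⟨1, h1⟩) :=
      kthLargest_image a ha T 1 h1
    have e3 : kthLargest (F.image a) 3 = a ((F.sort (· ≤ ·)).get ⟨2, h2⟩) :=
      kthLargest_image a ha F 2 h2
    rw [e2, e3, gt_iff_lt, ha.lt_iff_gt]
    have eT : T.filter (· < c4) = S4.filter (fun i => f.1 i = true) := by
      ext i
      simp only [hT, hS4, Finset.mem_filter, Finset.mem_univ, true_and]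
      tauto
    have eF : F.filter (· < c4) = S4.filter (fun i => f.1 i = false) := by
      ext i
      simp only [hF, hS4, Finset.mem_filter, Finset.mem_univ, true_and]
      tauto
    have hwindow : (T.filter (· < c4)).card + (F.filter (· < c4)).card = 4 := by
      rw [eT, eF]
      have hh := Finset.card_filter_add_card_filter_not
        (s := S4) (p := fun i => f.1 i = true)
      simp only [Bool.not_eq_true] at hh
      rw [hS4card] at hh
      simpa using hh
    have hT4 : (T.filter (· < c4)).card
        = 1 + (if f.1 z = true then 1 else 0) + (if f.1 w = true then 1 else 0) := by
      rw [eT, hS4eq, Finset.card_filter]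
      rw [show ({x, y, z, w} : Finset (Fin (2 * n)))
          = insert x (insert y (insert z {w})) from rfl]
      rw [Finset.sum_insert (by simp [hxy, Ne.symm hzx, Ne.symm hwx])]
      rw [Finset.sum_insert (by simp [Ne.symm hzy, Ne.symm hwy])]
      rw [Finset.sum_insert (by simp [hzw])]
      rw [Finset.sum_singleton, hyf f]
      cases hbx : f.1 x <;> simp [hbx] <;> ring
    constructor
    · intro hlt
      by_contra hcon
      push_neg at hcon
      simp only [Bool.not_eq_true] at hcon
      have hT1 : (T.filter (· < c4)).card = 1 := by
        rw [hT4, hcon.1, hcon.2]; simp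
      have hF3 : 3 ≤ (F.filter (· < c4)).card := by omega
      have hf3lt : (F.sort (· ≤ ·)).get ⟨2, h2⟩ < c4 := (sort_get_lt_iff F c4 2 h2).2 hF3
      have ht2ge : ¬ ((T.sort (· ≤ ·)).get ⟨1, h1⟩ < c4) := by
        rw [sort_get_lt_iff T c4 1 h1]; omega
      push_neg at ht2ge
      exact absurd hlt (not_lt.2 (le_trans (le_of_lt hf3lt) ht2ge))
    · intro hor
      have hT2 : 2 ≤ (T.filter (· < c4)).card := by
        rcases hor with h | h
        · rw [hT4, h, if_pos rfl]
          omega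
        · rw [hT4, h, if_pos rfl]
          omega
      have ht2lt : (T.sort (· ≤ ·)).get ⟨1, h1⟩ < c4 := (sort_get_lt_iff T c4 1 h1).2 hT2
      have hf3ge : ¬ ((F.sort (· ≤ ·)).get ⟨2, h2⟩ < c4) := by
        rw [sort_get_lt_iff F c4 2 h2]; omega
      push_neg at hf3ge
      exact lt_of_lt_of_le ht2lt hf3ge
  -- counting
  obtain ⟨m, hm⟩ : ∃ m : ℕ, (Finset.univ.filter
      (fun f : {f : Fin (2 * n) → Bool // ∀ x, f (pair x) = !(f x)} =>
        f.1 z = true ∧ f.1 w = true)).card = m := ⟨_, rfl⟩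
  have hswap : ∀ b1 b2 : Bool,
      (Finset.univ.filter (fun f : {f : Fin (2 * n) → Bool // ∀ x, f (pair x) = !(f x)} =>
        f.1 z = b1 ∧ f.1 w = b2)).card =
      (Finset.univ.filter (fun f : {f : Fin (2 * n) → Bool // ∀ x, f (pair x) = !(f x)} =>
        f.1 w = b2 ∧ f.1 z = b1)).card := by
    intro b1 b2
    congr 1
    apply Finset.filter_congr
    intro f _
    constructor <;> exact fun h => ⟨h.2, h.1⟩
  have hfib : ∀ b1 b2 : Bool,
      (Finset.univ.filter (fun f : {f : Fin (2 * n) → Bool // ∀ x, f (pair x) = !(f x)} =>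
        f.1 z = b1 ∧ f.1 w = b2)).card = m := by
    intro b1 b2
    have step1 : (Finset.univ.filter
        (fun f : {f : Fin (2 * n) → Bool // ∀ x, f (pair x) = !(f x)} =>
          f.1 z = b1 ∧ f.1 w = b2)).card =
        (Finset.univ.filter
        (fun f : {f : Fin (2 * n) → Bool // ∀ x, f (pair x) = !(f x)} =>
          f.1 z = true ∧ f.1 w = b2)).card := by
      cases b1
      · have hh := fiber_flip_card pair hinv z w hwz hwpz false b2
        simpa using hh
      · rfl
    have step2 : (Finset.univ.filter
        (fun f : {f : Fin (2 * n) → Bool // ∀ x, f (pair x) = !(f x)} =>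
          f.1 z = true ∧ f.1 w = b2)).card =
        (Finset.univ.filter
        (fun f : {f : Fin (2 * n) → Bool // ∀ x, f (pair x) = !(f x)} =>
          f.1 z = true ∧ f.1 w = true)).card := by
      cases b2
      · rw [hswap true false]
        have hh := fiber_flip_card pair hinv w z hzw hzpw false true
        simp only [Bool.not_false] at hh
        rw [hh, ← hswap true true]
      · rfl
    rw [step1, step2]
    exact hm
  have htot : Fintype.card {f : Fin (2 * n) → Bool // ∀ x, f (pair x) = !(f x)} = 4 * m := by
    rw [← Finset.card_univ]
    rw [Finset.card_eq_sum_card_fiberwise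
      (f := fun f : {f : Fin (2 * n) → Bool // ∀ x, f (pair x) = !(f x)} => (f.1 z, f.1 w))
      (t := (Finset.univ : Finset (Bool × Bool))) (fun _ _ => Finset.mem_univ _)]
    have hfi : ∀ p : Bool × Bool,
        (Finset.univ.filter
          (fun f : {f : Fin (2 * n) → Bool // ∀ x, f (pair x) = !(f x)} =>
            (f.1 z, f.1 w) = p)).card = m := by
      intro p
      rw [show (Finset.univ.filter
          (fun f : {f : Fin (2 * n) → Bool // ∀ x, f (pair x) = !(f x)} =>
            (f.1 z, f.1 w) = p))
          = Finset.univ.filter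
          (fun f : {f : Fin (2 * n) → Bool // ∀ x, f (pair x) = !(f x)} =>
            f.1 z = p.1 ∧ f.1 w = p.2) from by
        apply Finset.filter_congr
        intro f _
        simp [Prod.ext_iff]]
      exact hfib p.1 p.2
    rw [Finset.sum_congr rfl (fun p _ => hfi p)]
    rw [Finset.sum_const, smul_eq_mul]
    simp
  have hEcard : (Finset.univ.filter
      (fun f : {f : Fin (2 * n) → Bool // ∀ x, f (pair x) = !(f x)} =>
        f.1 z = true ∨ f.1 w = true)).card = 3 * m := by
    have hneg : (Finset.univ.filter
        (fun f : {f : Fin (2 * n) → Bool // ∀ x, f (pair x) = !(f x)} =>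
          ¬ (f.1 z = true ∨ f.1 w = true))).card = m := by
      rw [show (Finset.univ.filter
          (fun f : {f : Fin (2 * n) → Bool // ∀ x, f (pair x) = !(f x)} =>
            ¬ (f.1 z = true ∨ f.1 w = true)))
          = Finset.univ.filter
          (fun f : {f : Fin (2 * n) → Bool // ∀ x, f (pair x) = !(f x)} =>
            f.1 z = false ∧ f.1 w = false) from by
        apply Finset.filter_congr
        intro f _
        simp [not_or]]
      exact hfib false false
    have hh := Finset.card_filter_add_card_filter_not
      (s := (Finset.univ : Finset {f : Fin (2 * n) → Bool // ∀ x, f (pair x) = !(f x)}))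
      (p := fun f => f.1 z = true ∨ f.1 w = true)
    rw [hneg, Finset.card_univ, htot] at hh
    have h4 : 4 * m = 3 * m + m := by ring
    rw [h4] at hh
    exact Nat.add_right_cancel hh
  have hm1 : 1 ≤ m := by
    rw [← hm]
    apply Finset.card_pos.2
    have hf0 : ∀ i : Fin (2 * n), (decide ((pair i) < pair (pair i))) = !(decide (i < pair i)) := by
      intro i
      rw [hinv i]
      rcases lt_or_gt_of_ne (hnf i) with h | h
      · simp [h, asymm h]
      · simp [h, asymm h]
    refine ⟨⟨fun i => decide (i < pair i), fun i => hf0 i⟩, ?_⟩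
    rw [Finset.mem_filter]
    refine ⟨Finset.mem_univ _, ?_, ?_⟩
    · simp only [decide_eq_true_eq, Fin.lt_def]
      exact lt_of_lt_of_le hz4 hpz4
    · simp only [decide_eq_true_eq, Fin.lt_def]
      exact lt_of_lt_of_le hw4 hpw4
  rw [uniformPr_congr hevent]
  unfold uniformPr
  rw [htot]
  have hm0 : (m : ℝ) ≠ 0 := Nat.cast_ne_zero.2 (Nat.one_le_iff_ne_zero.1 hm1)
  have h34 : ((3 * m : ℕ) : ℝ) / ((4 * m : ℕ) : ℝ) = 3 / 4 := by
    push_cast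
    rw [mul_comm (3 : ℝ), mul_comm (4 : ℝ), mul_div_mul_left _ _ hm0]
  rw [← h34]
  congr 2
  rw [Finset.filter_congr_decidable]
  exact hEcard
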